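/- For a bipartite pure state |ψ⟩ ∈ H_1 ⊗ H_2, E_{k_1,k_2}(|ψ⟩) equals the sum of the min(k_1,k_2) largest eigenvalues of the reduced density matrix ρ_1 = tr_2 |ψ⟩⟨ψ|; in particular E_{k_1,k_2} = E_{k_2,k_1}. -/

import Mathlib

open scoped ComplexOrder Matrix

noncomputable def sortedDesc {d : ℕ} (v : Fin d → ℝ) : Fin d → ℝ :=
  fun i => (v ∘ Tuple.sort v) (Fin.rev i)

def psum {d : ℕ} (v : Fin d → ℝ) (k : ℕ) : ℝ :=
  ∑ i : Fin d, if (i : ℕ) < k then v i else 0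

def IsProjOfRank {ι : Type*} [Fintype ι] [DecidableEq ι]
    (P : Matrix ι ι ℂ) (k : ℕ) : Prop :=
  P.IsHermitian ∧ P * P = P ∧ P.rank = k

/-- The bipartite monotone E_{k₁,k₂}: a bipartite pure vector ψ ∈ H₁ ⊗ H₂ is
represented by its coefficient matrix M, so that (P ⊗ Q)ψ has matrix P * M * Qᵀ. -/
noncomputable def Ebi {m n : Type*} [Fintype m] [DecidableEq m] [Fintype n] [DecidableEq n]
    (k₁ k₂ : ℕ) (M : Matrix m n ℂ) : ℝ :=
  sSup {x | ∃ (P : Matrix m m ℂ) (Q : Matrix n n ℂ),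
    IsProjOfRank P k₁ ∧ IsProjOfRank Q k₂ ∧
    x = ∑ i, ∑ j, Complex.normSq ((P * M * Qᵀ) i j)}


open Matrix Finset

open Matrix Finset in
noncomputable def frobSq {m n : Type*} [Fintype m] [Fintype n] (A : Matrix m n ℂ) : ℝ :=
  ∑ i, ∑ j, Complex.normSq (A i j)

open Matrix Finset

lemma trace_conjTranspose_mul_self {m n : Type*} [Fintype m] [Fintype n]
    (A : Matrix m n ℂ) : (Aᴴ * A).trace = (frobSq A : ℂ) := by
  unfold frobSq Matrix.trace
  push_cast
  rw [Finset.sum_comm]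
  simp only [Matrix.diag_apply, Matrix.mul_apply, Matrix.conjTranspose_apply]
  congr 1; ext i; congr 1; ext j
  rw [show star (A j i) = (starRingEnd ℂ) (A j i) from rfl, mul_comm, Complex.mul_conj]

lemma frobSq_nonneg {m n : Type*} [Fintype m] [Fintype n] (A : Matrix m n ℂ) :
    0 ≤ frobSq A :=
  Finset.sum_nonneg fun _ _ => Finset.sum_nonneg fun _ _ => Complex.normSq_nonneg _

lemma re_trace_conjTranspose_mul_self {m n : Type*} [Fintype m] [Fintype n]
    (A : Matrix m n ℂ) : ((Aᴴ * A).trace).re = frobSq A := by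
  rw [trace_conjTranspose_mul_self]; simp

lemma frobSq_conjTranspose {m n : Type*} [Fintype m] [Fintype n] (A : Matrix m n ℂ) :
    frobSq Aᴴ = frobSq A := by
  unfold frobSq
  rw [Finset.sum_comm]
  simp [Matrix.conjTranspose_apply, Complex.normSq_conj]

/-- key identity: for a Hermitian idempotent `R`, `frobSq (A * R)` is a trace. -/
lemma frobSq_mul_proj_eq {m n : Type*} [Fintype m] [Fintype n]
    (A : Matrix m n ℂ) (R : Matrix n n ℂ) (hRH : Rᴴ = R) (hRI : R * R = R) :
    frobSq (A * R) = (((Aᴴ * A) * R).trace).re := by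
  rw [← re_trace_conjTranspose_mul_self (A * R)]
  congr 1
  rw [Matrix.conjTranspose_mul, hRH]
  calc (R * Aᴴ * (A * R)).trace = ((A * R) * R * Aᴴ).trace := Matrix.trace_mul_cycle R Aᴴ (A * R)
    _ = (A * R * Aᴴ).trace := by rw [Matrix.mul_assoc A R R, hRI]
    _ = (Aᴴ * A * R).trace := Matrix.trace_mul_cycle A R Aᴴ

lemma frobSq_mul_le {m n : Type*} [Fintype m] [Fintype n] [DecidableEq n]
    (A : Matrix m n ℂ) (R : Matrix n n ℂ) (hRH : Rᴴ = R) (hRI : R * R = R) :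
    frobSq (A * R) ≤ frobSq A := by
  have h1 : (1 - R : Matrix n n ℂ)ᴴ = 1 - R := by
    rw [Matrix.conjTranspose_sub, hRH, Matrix.conjTranspose_one]
  have h2 : (1 - R : Matrix n n ℂ) * (1 - R) = 1 - R := by
    rw [Matrix.sub_mul, Matrix.mul_sub, Matrix.mul_sub, hRI]
    simp
  have e1 := frobSq_mul_proj_eq A R hRH hRI
  have e2 := frobSq_mul_proj_eq A (1 - R) h1 h2
  have esum : frobSq (A * R) + frobSq (A * (1 - R)) = frobSq A := by
    rw [e1, e2, ← Complex.add_re, ← Matrix.trace_add, ← Matrix.mul_add]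
    simp [re_trace_conjTranspose_mul_self]
  nlinarith [frobSq_nonneg (A * (1 - R))]

lemma frobSq_proj_mul_le {m n : Type*} [Fintype m] [Fintype n] [DecidableEq m]
    (A : Matrix m n ℂ) (P : Matrix m m ℂ) (hPH : Pᴴ = P) (hPI : P * P = P) :
    frobSq (P * A) ≤ frobSq A := by
  rw [← frobSq_conjTranspose (P * A), Matrix.conjTranspose_mul, hPH,
    ← frobSq_conjTranspose A]
  exact frobSq_mul_le Aᴴ P hPH hPI

/-- sum over `Fin d` with a cut-off at `k ≤ d` equals a sum over `range k`. -/
lemma sum_fin_ite_lt {d k : ℕ} (h : k ≤ d) (g : ℕ → ℝ) :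
    (∑ i : Fin d, if (i : ℕ) < k then g i else 0) = ∑ t ∈ Finset.range k, g t := by
  rw [Fin.sum_univ_eq_sum_range (fun t => if t < k then g t else 0) d]
  rw [Finset.sum_ite, Finset.sum_const_zero, add_zero]
  congr 1
  ext t
  simp only [Finset.mem_filter, Finset.mem_range]
  omega

lemma card_filter_lt {d k : ℕ} (h : k ≤ d) :
    (Finset.univ.filter (fun i : Fin d => (i : ℕ) < k)).card = k := by
  have : (Finset.univ.filter (fun i : Fin d => (i : ℕ) < k)) =
      Finset.map (Fin.castLEEmb h) Finset.univ := by
    ext j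
    simp only [Finset.mem_filter, Finset.mem_univ, true_and, Finset.mem_map]
    constructor
    · intro hj; exact ⟨⟨j.1, hj⟩, rfl⟩
    · rintro ⟨a, rfl⟩; exact a.2
  rw [this, Finset.card_map, Finset.card_univ, Fintype.card_fin]

/-- The permutation realizing `sortedDesc`. -/
noncomputable def sortPerm {d : ℕ} (v : Fin d → ℝ) : Equiv.Perm (Fin d) :=
  Fin.revPerm.trans (Tuple.sort v)

lemma sortedDesc_eq {d : ℕ} (v : Fin d → ℝ) (i : Fin d) :
    sortedDesc v i = v (sortPerm v i) := rfl

lemma sortedDesc_anti {d : ℕ} (v : Fin d → ℝ) {i j : Fin d} (hij : i ≤ j) :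
    sortedDesc v j ≤ sortedDesc v i := by
  have := Tuple.monotone_sort v (show Fin.rev j ≤ Fin.rev i from Fin.rev_le_rev.mpr hij)
  exact this

/-- The "bathtub" rearrangement bound. -/
lemma bathtub {d : ℕ} (v t : Fin d → ℝ) (hv : ∀ i, 0 ≤ v i) (ht0 : ∀ i, 0 ≤ t i)
    (ht1 : ∀ i, t i ≤ 1) (r : ℕ) (hsum : ∑ i, t i ≤ r) :
    ∑ i, v i * t i ≤ psum (sortedDesc v) r := by
  classical
  set σ := sortPerm v with hσ
  have hre : ∑ i, v i * t i = ∑ i, sortedDesc v i * t (σ i) := by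
    rw [← Equiv.sum_comp σ (fun i => v i * t i)]
    rfl
  have hsum' : ∑ i, t (σ i) ≤ r := by
    rw [Equiv.sum_comp σ t]; exact hsum
  set w := sortedDesc v with hw
  have hw0 : ∀ i, 0 ≤ w i := fun i => hv _
  rw [hre]
  by_cases hrd : d ≤ r
  · have : psum w r = ∑ i, w i := by
      unfold psum; apply Finset.sum_congr rfl
      intro i _; rw [if_pos (lt_of_lt_of_le i.2 hrd)]
    rw [this]
    exact Finset.sum_le_sum fun i _ => mul_le_of_le_one_right (hw0 i) (ht1 _)
  · push_neg at hrd
    set c := w ⟨r, hrd⟩ with hc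
    have hc0 : 0 ≤ c := hw0 _
    have key : ∀ i : Fin d, w i * t (σ i) ≤
        (if (i : ℕ) < r then w i else 0) + c * (t (σ i) - if (i : ℕ) < r then 1 else 0) := by
      intro i
      by_cases hi : (i : ℕ) < r
      · rw [if_pos hi, if_pos hi]
        have hwi : c ≤ w i := sortedDesc_anti v (show i ≤ ⟨r, hrd⟩ from le_of_lt hi)
        nlinarith [ht1 (σ i)]
      · rw [if_neg hi, if_neg hi]
        have hwi : w i ≤ c := sortedDesc_anti v (show (⟨r, hrd⟩ : Fin d) ≤ i by
          exact not_lt.mp hi)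
        have := ht0 (σ i)
        nlinarith
    have h1 : (∑ i : Fin d, if (i : ℕ) < r then (1:ℝ) else 0) = r := by
      rw [sum_fin_ite_lt (le_of_lt hrd) (fun _ => (1:ℝ))]
      simp
    have h2 : ∑ i : Fin d, ((if (i : ℕ) < r then w i else 0) +
        c * (t (σ i) - if (i : ℕ) < r then 1 else 0))
        = psum w r + c * ((∑ i, t (σ i)) - r) := by
      rw [Finset.sum_add_distrib, ← Finset.mul_sum, Finset.sum_sub_distrib, h1]
      rfl
    have h3 := Finset.sum_le_sum fun i (_ : i ∈ Finset.univ) => key i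
    rw [h2] at h3
    nlinarith

lemma proj_diag_re_mem {d : ℕ} (C : Matrix (Fin d) (Fin d) ℂ) (hCH : Cᴴ = C)
    (hCI : C * C = C) (i : Fin d) : 0 ≤ (C i i).re ∧ (C i i).re ≤ 1 := by
  have hentry : C i i = ∑ l, ((Complex.normSq (C i l) : ℝ) : ℂ) := by
    conv_lhs => rw [← hCI]
    rw [Matrix.mul_apply]
    congr 1; ext l
    have : C l i = (starRingEnd ℂ) (C i l) := by
      conv_lhs => rw [← hCH]
      rfl
    rw [this, Complex.mul_conj]
  have hre : (C i i).re = ∑ l, Complex.normSq (C i l) := by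
    rw [hentry]; push_cast; rw [Complex.re_sum]; simp
  have h0 : 0 ≤ (C i i).re := by
    rw [hre]; exact Finset.sum_nonneg fun _ _ => Complex.normSq_nonneg _
  have hsq : Complex.normSq (C i i) ≤ (C i i).re := by
    rw [hre]
    exact Finset.single_le_sum (fun l (_ : l ∈ Finset.univ) => Complex.normSq_nonneg _)
      (Finset.mem_univ i)
  have : (C i i).re ^ 2 ≤ Complex.normSq (C i i) := by
    rw [Complex.normSq_apply]; nlinarith [sq_nonneg (C i i).im]
  constructor
  · exact h0
  · nlinarith

lemma trace_psd_mul_proj_le {d : ℕ} {ρ : Matrix (Fin d) (Fin d) ℂ} (hρ : ρ.PosSemidef)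
    (P : Matrix (Fin d) (Fin d) ℂ) (hPH : Pᴴ = P) (hPI : P * P = P) (r : ℕ)
    (htr : (P.trace).re ≤ r) :
    ((ρ * P).trace).re ≤ psum (sortedDesc hρ.1.eigenvalues) r := by
  classical
  have hH := hρ.1
  set V : Matrix (Fin d) (Fin d) ℂ := (Matrix.IsHermitian.eigenvectorUnitary hH : Matrix (Fin d) (Fin d) ℂ) with hV
  have hVs : V * star V = 1 := Matrix.mem_unitaryGroup_iff.mp (Matrix.IsHermitian.eigenvectorUnitary hH).2
  have hsV : star V * V = 1 := Matrix.mem_unitaryGroup_iff'.mp (Matrix.IsHermitian.eigenvectorUnitary hH).2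
  set D : Matrix (Fin d) (Fin d) ℂ := Matrix.diagonal (RCLike.ofReal ∘ hH.eigenvalues) with hD
  set C : Matrix (Fin d) (Fin d) ℂ := star V * P * V with hC
  have hCH : Cᴴ = C := by
    rw [hC]
    rw [show (star V * P * V : Matrix (Fin d) (Fin d) ℂ)ᴴ = Vᴴ * (Pᴴ * (star V)ᴴ) by
      rw [Matrix.conjTranspose_mul, Matrix.conjTranspose_mul]]
    rw [hPH]
    rw [show (star V)ᴴ = V from Matrix.conjTranspose_conjTranspose V]
    rw [show Vᴴ = star V from rfl, Matrix.mul_assoc]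
  have hCI : C * C = C := by
    rw [hC]
    calc star V * P * V * (star V * P * V)
        = star V * P * (V * star V) * P * V := by
          simp only [Matrix.mul_assoc]
      _ = star V * P * P * V := by rw [hVs]; simp only [Matrix.mul_assoc, Matrix.one_mul]
      _ = star V * P * V := by
          rw [Matrix.mul_assoc (star V) P P, hPI]
  have htrC : C.trace = P.trace := by
    rw [hC, Matrix.trace_mul_cycle (star V) P V, hVs, Matrix.one_mul]
  have htrace : (ρ * P).trace = (D * C).trace := by
    conv_lhs => rw [hH.spectral_theorem, Unitary.conjStarAlgAut_apply]
    rw [← hV, ← hD]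
    calc (V * D * star V * P).trace
        = ((V * D) * (star V * P)).trace := by rw [Matrix.mul_assoc]
      _ = ((star V * P) * (V * D)).trace := Matrix.trace_mul_comm _ _
      _ = ((star V * P * V) * D).trace := by simp only [Matrix.mul_assoc]
      _ = (D * C).trace := Matrix.trace_mul_comm _ _
  have hdc : (D * C).trace = ∑ i, ((hH.eigenvalues i : ℝ) : ℂ) * C i i := by
    unfold Matrix.trace
    congr 1; ext i
    rw [Matrix.diag_apply, hD, Matrix.diagonal_mul]
    rfl
  set t : Fin d → ℝ := fun i => (C i i).re with ht
  have hre : ((ρ * P).trace).re = ∑ i, hH.eigenvalues i * t i := by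
    rw [htrace, hdc, Complex.re_sum]
    congr 1; ext i
    rw [Complex.re_ofReal_mul]
  rw [hre]
  have hsumt : ∑ i, t i ≤ r := by
    have : ∑ i, t i = (C.trace).re := by
      unfold Matrix.trace; rw [Complex.re_sum]; rfl
    rw [this, htrC]; exact htr
  exact bathtub hH.eigenvalues t (fun i => hρ.eigenvalues_nonneg i)
    (fun i => (proj_diag_re_mem C hCH hCI i).1)
    (fun i => (proj_diag_re_mem C hCH hCI i).2) r hsumt

lemma re_trace_proj_eq_rank {d : ℕ} (P : Matrix (Fin d) (Fin d) ℂ) (hP : P.IsHermitian)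
    (hPI : P * P = P) : (P.trace).re = (P.rank : ℝ) := by
  classical
  set V : Matrix (Fin d) (Fin d) ℂ := (Matrix.IsHermitian.eigenvectorUnitary hP : Matrix (Fin d) (Fin d) ℂ) with hV
  have hVs : V * star V = 1 := Matrix.mem_unitaryGroup_iff.mp (Matrix.IsHermitian.eigenvectorUnitary hP).2
  have hsV : star V * V = 1 := Matrix.mem_unitaryGroup_iff'.mp (Matrix.IsHermitian.eigenvectorUnitary hP).2
  set D : Matrix (Fin d) (Fin d) ℂ := Matrix.diagonal (RCLike.ofReal ∘ hP.eigenvalues) with hD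
  have hDeq : star V * P * V = D := by
    have := hP.conjStarAlgAut_star_eigenvectorUnitary
    simp only [Unitary.conjStarAlgAut_apply, Unitary.coe_star, star_star] at this
    exact this
  have hDD : D * D = D := by
    rw [← hDeq]
    calc star V * P * V * (star V * P * V)
        = star V * P * (V * star V) * P * V := by simp only [Matrix.mul_assoc]
      _ = star V * P * P * V := by rw [hVs]; simp only [Matrix.mul_assoc, Matrix.one_mul]
      _ = star V * P * V := by rw [Matrix.mul_assoc (star V) P P, hPI]
  have h01 : ∀ i, hP.eigenvalues i = 0 ∨ hP.eigenvalues i = 1 := by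
    intro i
    have h := congr_fun (congr_fun hDD i) i
    rw [Matrix.mul_apply] at h
    simp only [hD, Matrix.diagonal_apply, Function.comp_apply] at h
    rw [Finset.sum_eq_single i (fun b _ hb => by simp [Ne.symm hb]) (by simp)] at h
    simp only [if_pos rfl] at h
    have h' : (hP.eigenvalues i : ℂ) * (hP.eigenvalues i : ℂ) = (hP.eigenvalues i : ℂ) := h
    have : hP.eigenvalues i * hP.eigenvalues i = hP.eigenvalues i := by
      exact_mod_cast h'
    rcases mul_eq_zero.mp (by ring_nf; nlinarith [this] : hP.eigenvalues i * (hP.eigenvalues i - 1) = 0) with h0 | h0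
    · exact Or.inl h0
    · exact Or.inr (by linarith [sub_eq_zero.mp h0])
  have htr : P.trace = D.trace := by
    conv_lhs => rw [hP.spectral_theorem, Unitary.conjStarAlgAut_apply]
    rw [Matrix.trace_mul_cycle, ← hV, ← hD, hsV, Matrix.one_mul]
  have htrD : (D.trace).re = ∑ i, hP.eigenvalues i := by
    unfold Matrix.trace
    rw [Complex.re_sum]
    congr 1; ext i
    simp [hD]
  have hsum : ∑ i, hP.eigenvalues i = ∑ i, (if hP.eigenvalues i ≠ 0 then (1:ℝ) else 0) := by
    congr 1; ext i
    rcases h01 i with h | h <;> simp [h]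
  rw [htr, htrD, hsum, Finset.sum_boole, hP.rank_eq_card_non_zero_eigs, Fintype.card_subtype]

lemma vecMulVec_star_conjTranspose {d : ℕ} (x : Fin d → ℂ) :
    (vecMulVec x (star x))ᴴ = vecMulVec x (star x) := by
  ext i j
  simp [vecMulVec_apply, Matrix.conjTranspose_apply, mul_comm]

lemma vecMulVec_mul_vecMulVec {d e f : ℕ} (x : Fin d → ℂ) (u : Fin e → ℂ)
    (z : Fin e → ℂ) (v : Fin f → ℂ) :
    (vecMulVec x u) * (vecMulVec z v) = (u ⬝ᵥ z) • vecMulVec x v := by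
  ext i j
  simp only [Matrix.mul_apply, vecMulVec_apply, Matrix.smul_apply, dotProduct, smul_eq_mul,
    Finset.sum_mul, Finset.mul_sum]
  congr 1; ext l; ring

lemma trace_mul_vecMulVec {d e : ℕ} (B : Matrix (Fin d) (Fin e) ℂ)
    (x : Fin e → ℂ) (y : Fin d → ℂ) :
    (B * vecMulVec x y).trace = y ⬝ᵥ (B *ᵥ x) := by
  unfold Matrix.trace
  simp only [Matrix.diag_apply, Matrix.mul_apply, vecMulVec_apply]
  rw [show (y ⬝ᵥ (B *ᵥ x)) = ∑ i, ∑ l, y i * (B i l * x l) by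
    simp [dotProduct, Matrix.mulVec, Finset.mul_sum]]
  refine Finset.sum_congr rfl fun i _ => ?_
  refine Finset.sum_congr rfl fun l _ => ?_
  ring

lemma trace_vecMulVec {d : ℕ} (x y : Fin d → ℂ) :
    (vecMulVec x y).trace = x ⬝ᵥ y := by
  unfold Matrix.trace
  simp [vecMulVec_apply, dotProduct, Matrix.diag_apply]

section UnitaryDiag

variable {d : ℕ} (U : Matrix (Fin d) (Fin d) ℂ)

lemma udiag_conjTranspose (χ : Fin d → ℂ) (hχ : ∀ i, χ i = 0 ∨ χ i = 1) :
    (U * diagonal χ * Uᴴ)ᴴ = U * diagonal χ * Uᴴ := by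
  rw [Matrix.conjTranspose_mul, Matrix.conjTranspose_mul, Matrix.conjTranspose_conjTranspose,
    Matrix.diagonal_conjTranspose]
  have : star χ = χ := by
    funext i; rcases hχ i with h | h <;> simp [Pi.star_apply, h]
  rw [this, Matrix.mul_assoc]

lemma udiag_idem (hsU : star U * U = 1) (χ : Fin d → ℂ) (hχ : ∀ i, χ i = 0 ∨ χ i = 1) :
    (U * diagonal χ * Uᴴ) * (U * diagonal χ * Uᴴ) = U * diagonal χ * Uᴴ := by
  have hUH : (Uᴴ : Matrix (Fin d) (Fin d) ℂ) = star U := rfl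
  calc (U * diagonal χ * Uᴴ) * (U * diagonal χ * Uᴴ)
      = U * diagonal χ * (Uᴴ * U) * diagonal χ * Uᴴ := by simp only [Matrix.mul_assoc]
    _ = U * (diagonal χ * diagonal χ) * Uᴴ := by
        rw [hUH, hsU]; simp only [Matrix.mul_assoc, Matrix.one_mul]
    _ = U * diagonal χ * Uᴴ := by
        rw [Matrix.diagonal_mul_diagonal]
        have : (fun i => χ i * χ i) = χ := by funext i; rcases hχ i with h | h <;> simp [h]
        rw [this, Matrix.mul_assoc]

lemma udiag_rank (hU : U ∈ Matrix.unitaryGroup (Fin d) ℂ) (χ : Fin d → ℂ) :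
    (U * diagonal χ * Uᴴ).rank = (Finset.univ.filter (fun i => χ i ≠ 0)).card := by
  have hdet : IsUnit U.det := by
    have h := Matrix.mem_unitaryGroup_iff.mp hU
    have := congr_arg Matrix.det h
    rw [Matrix.det_mul, Matrix.det_one] at this
    exact IsUnit.of_mul_eq_one _ this
  have hdetH : IsUnit (Uᴴ).det := by
    have h := Matrix.mem_unitaryGroup_iff'.mp hU
    have := congr_arg Matrix.det h
    rw [Matrix.det_mul, Matrix.det_one] at this
    exact IsUnit.of_mul_eq_one _ (by rwa [mul_comm] at this)
  rw [Matrix.rank_mul_eq_left_of_isUnit_det Uᴴ (U * diagonal χ) hdetH,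
    Matrix.rank_mul_eq_right_of_isUnit_det U (diagonal χ) hdet,
    Matrix.rank_diagonal, Fintype.card_subtype]

lemma udiag_eq_sum_outer (χ : Fin d → ℂ) :
    U * diagonal χ * Uᴴ =
      ∑ j, χ j • vecMulVec (fun x => U x j) (star (fun x => U x j)) := by
  ext i l
  rw [Matrix.mul_assoc, Matrix.mul_apply, Matrix.sum_apply]
  refine Finset.sum_congr rfl fun j _ => ?_
  rw [Matrix.diagonal_mul]
  simp only [Matrix.smul_apply, vecMulVec_apply, Pi.star_apply, Matrix.conjTranspose_apply,
    smul_eq_mul]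
  ring

lemma udiag_mulVec_col (hsU : star U * U = 1) (χ : Fin d → ℂ) (a : Fin d) :
    (U * diagonal χ * Uᴴ) *ᵥ (fun x => U x a) = χ a • (fun x => U x a) := by
  have h1 : Uᴴ *ᵥ (fun x => U x a) = Pi.single a 1 := by
    funext b
    have : (Uᴴ *ᵥ fun x => U x a) b = (star U * U) b a := by
      simp [Matrix.mulVec, Matrix.mul_apply, dotProduct, Matrix.star_eq_conjTranspose]
    rw [this, hsU, Matrix.one_apply]
    simp [Pi.single_apply]
  rw [← Matrix.mulVec_mulVec, ← Matrix.mulVec_mulVec, h1, Matrix.diagonal_mulVec_single,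
    mul_one, Matrix.mulVec_single]
  funext i
  simp [mul_comm]

end UnitaryDiag

lemma eigencol_dot {d : ℕ} {A : Matrix (Fin d) (Fin d) ℂ} (hA : A.IsHermitian) (a b : Fin d) :
    star (fun x => (hA.eigenvectorUnitary : Matrix (Fin d) (Fin d) ℂ) x a) ⬝ᵥ
      (fun x => (hA.eigenvectorUnitary : Matrix (Fin d) (Fin d) ℂ) x b) =
      if a = b then 1 else 0 := by
  have hsU : star (hA.eigenvectorUnitary : Matrix (Fin d) (Fin d) ℂ) *
      (hA.eigenvectorUnitary : Matrix (Fin d) (Fin d) ℂ) = 1 :=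
    Matrix.mem_unitaryGroup_iff'.mp hA.eigenvectorUnitary.2
  have h := congr_fun (congr_fun hsU a) b
  rw [Matrix.one_apply] at h
  rw [← h]
  simp [Matrix.mul_apply, dotProduct, Matrix.star_eq_conjTranspose, Matrix.conjTranspose_apply]

lemma eigencol_mulVec {d : ℕ} {A : Matrix (Fin d) (Fin d) ℂ} (hA : A.IsHermitian) (j : Fin d) :
    A *ᵥ (fun x => (hA.eigenvectorUnitary : Matrix (Fin d) (Fin d) ℂ) x j) =
      ((hA.eigenvalues j : ℝ) : ℂ) •
        (fun x => (hA.eigenvectorUnitary : Matrix (Fin d) (Fin d) ℂ) x j) := by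
  have h := hA.mulVec_eigenvectorBasis j
  have hcol : (fun x => (hA.eigenvectorUnitary : Matrix (Fin d) (Fin d) ℂ) x j) =
      (WithLp.equiv 2 (Fin d → ℂ)) (hA.eigenvectorBasis j) :=
    funext fun x => hA.eigenvectorUnitary_apply x j
  rw [hcol, WithLp.equiv_apply, h]
  funext x
  simp [Complex.real_smul]

lemma psum_transfer {d₁ d₂ : ℕ} (M : Matrix (Fin d₁) (Fin d₂) ℂ) (k : ℕ)
    (h1 : k ≤ d₁) (h2 : k ≤ d₂) :
    psum (sortedDesc (Matrix.posSemidef_conjTranspose_mul_self M).1.eigenvalues) k ≤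
      psum (sortedDesc (Matrix.posSemidef_self_mul_conjTranspose M).1.eigenvalues) k := by
  classical
  set hρ₂ := Matrix.posSemidef_conjTranspose_mul_self M with hhρ₂
  set hρ₁ := Matrix.posSemidef_self_mul_conjTranspose M with hhρ₁
  set μ : Fin d₂ → ℝ := hρ₂.1.eigenvalues with hμ
  set σ : Equiv.Perm (Fin d₂) := sortPerm μ with hσ
  set U : Matrix (Fin d₂) (Fin d₂) ℂ :=
    (Matrix.IsHermitian.eigenvectorUnitary hρ₂.1 : Matrix (Fin d₂) (Fin d₂) ℂ) with hU
  set w : Fin d₂ → (Fin d₂ → ℂ) := fun j => fun x => U x (σ j) with hwdef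
  have hw : ∀ a b, star (w a) ⬝ᵥ w b = if a = b then (1:ℂ) else 0 := by
    intro a b
    rw [hwdef]
    rw [eigencol_dot hρ₂.1 (σ a) (σ b)]
    simp [Equiv.apply_eq_iff_eq]
  have heig : ∀ j, (Mᴴ * M) *ᵥ w j = ((μ (σ j) : ℝ) : ℂ) • w j := fun j =>
    eigencol_mulVec hρ₂.1 (σ j)
  have hMw : ∀ a b, star (M *ᵥ w a) ⬝ᵥ (M *ᵥ w b) =
      ((μ (σ b) : ℝ) : ℂ) * (if a = b then 1 else 0) := by
    intro a b
    rw [Matrix.star_mulVec, ← Matrix.dotProduct_mulVec, Matrix.mulVec_mulVec, heig b,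
      dotProduct_smul, hw a b]
    simp
  set G : Finset (Fin d₂) := Finset.univ.filter (fun j => (j:ℕ) < k ∧ μ (σ j) ≠ 0) with hG
  have hμpos : ∀ j ∈ G, 0 < μ (σ j) := by
    intro j hj
    rw [hG, Finset.mem_filter] at hj
    exact lt_of_le_of_ne (hρ₂.eigenvalues_nonneg _) (Ne.symm hj.2.2)
  set c : Fin d₂ → ℝ := fun j => (Real.sqrt (μ (σ j)))⁻¹ with hcdef
  set y : Fin d₂ → (Fin d₁ → ℂ) := fun j => ((c j : ℝ) : ℂ) • (M *ᵥ w j) with hydef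
  have hyy : ∀ a ∈ G, ∀ b ∈ G, star (y a) ⬝ᵥ y b = if a = b then (1:ℂ) else 0 := by
    intro a ha b hb
    rw [hydef]
    simp only [star_smul, smul_dotProduct, dotProduct_smul]
    rw [hMw a b]
    rcases eq_or_ne a b with rfl | hne
    · have hpos := hμpos a ha
      have h1 : Real.sqrt (μ (σ a)) * Real.sqrt (μ (σ a)) = μ (σ a) :=
        Real.mul_self_sqrt hpos.le
      have hs : Real.sqrt (μ (σ a)) ≠ 0 := ne_of_gt (Real.sqrt_pos.mpr hpos)
      have hca : c a * c a * μ (σ a) = 1 := by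
        rw [hcdef]
        field_simp
        rw [Real.sq_sqrt hpos.le]
      simp only [if_true, mul_one, smul_eq_mul, Complex.star_def, Complex.conj_ofReal]
      rw [show ((c a : ℝ) : ℂ) * (((c a : ℝ) : ℂ) * ((μ (σ a) : ℝ) : ℂ)) =
        (((c a * c a * μ (σ a) : ℝ)) : ℂ) by push_cast; ring]
      rw [hca]
      exact Complex.ofReal_one
    · simp [hne]
  set P' : Matrix (Fin d₁) (Fin d₁) ℂ := ∑ j ∈ G, vecMulVec (y j) (star (y j)) with hP'def
  have hP'H : P'ᴴ = P' := by
    rw [hP'def, Matrix.conjTranspose_sum]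
    exact Finset.sum_congr rfl fun j _ => vecMulVec_star_conjTranspose (y j)
  have hP'I : P' * P' = P' := by
    rw [hP'def, Finset.sum_mul_sum]
    have : ∀ a ∈ G, ∑ b ∈ G, vecMulVec (y a) (star (y a)) * vecMulVec (y b) (star (y b)) =
        vecMulVec (y a) (star (y a)) := by
      intro a ha
      have : ∀ b ∈ G, vecMulVec (y a) (star (y a)) * vecMulVec (y b) (star (y b)) =
          if a = b then vecMulVec (y a) (star (y b)) else 0 := by
        intro b hb
        rw [_root_.vecMulVec_mul_vecMulVec, hyy a ha b hb]
        rcases eq_or_ne a b with rfl | hne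
        · simp
        · simp [hne]
      rw [Finset.sum_congr rfl this, Finset.sum_ite_eq G a (fun b => vecMulVec (y a) (star (y b)))]
      rw [if_pos ha]
    exact Finset.sum_congr rfl this
  have htrP' : (P'.trace).re = (G.card : ℝ) := by
    rw [hP'def, Matrix.trace_sum]
    rw [show ∑ j ∈ G, (vecMulVec (y j) (star (y j))).trace = ∑ j ∈ G, (1:ℂ) from
      Finset.sum_congr rfl fun j hj => by
        rw [_root_.trace_vecMulVec, dotProduct_comm, hyy j hj j hj, if_pos rfl]]
    simp
  have hcard : (G.card : ℝ) ≤ (k : ℝ) := by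
    have : G ⊆ Finset.univ.filter (fun j : Fin d₂ => (j:ℕ) < k) := by
      intro j hj
      rw [hG, Finset.mem_filter] at hj
      exact Finset.mem_filter.mpr ⟨hj.1, hj.2.1⟩
    have := Finset.card_le_card this
    rw [card_filter_lt h2] at this
    exact_mod_cast this
  have hρy : ∀ j ∈ G, (M * Mᴴ) *ᵥ y j = ((μ (σ j) : ℝ) : ℂ) • y j := by
    intro j hj
    rw [hydef]
    rw [Matrix.mulVec_smul, Matrix.mulVec_mulVec, Matrix.mul_assoc, ← Matrix.mulVec_mulVec,
      heig j, Matrix.mulVec_smul]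
    rw [smul_comm]
  have hkey : (((M * Mᴴ) * P').trace).re = ∑ j ∈ G, μ (σ j) := by
    rw [hP'def, Finset.mul_sum, Matrix.trace_sum]
    rw [show ∑ j ∈ G, ((M * Mᴴ) * vecMulVec (y j) (star (y j))).trace
        = ∑ j ∈ G, ((μ (σ j) : ℝ) : ℂ) from Finset.sum_congr rfl fun j hj => by
      rw [trace_mul_vecMulVec, hρy j hj, dotProduct_smul,
        hyy j hj j hj, if_pos rfl, smul_eq_mul, mul_one]]
    rw [Complex.re_sum]
    exact Finset.sum_congr rfl fun j _ => Complex.ofReal_re _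
  have hfinal := trace_psd_mul_proj_le hρ₁ P' hP'H hP'I k (by rw [htrP']; exact hcard)
  rw [hkey] at hfinal
  refine le_trans ?_ hfinal
  -- psum of sorted μ over k equals the sum over G
  have : psum (sortedDesc μ) k = ∑ j ∈ Finset.univ.filter (fun j : Fin d₂ => (j:ℕ) < k), μ (σ j) := by
    unfold psum
    rw [Finset.sum_filter]
    exact Finset.sum_congr rfl fun j _ => by rw [sortedDesc_eq μ j, ← hσ]
  rw [this]
  rw [show ∑ j ∈ Finset.univ.filter (fun j : Fin d₂ => (j:ℕ) < k), μ (σ j) = ∑ j ∈ G, μ (σ j) by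
    refine (Finset.sum_subset (by
      intro j hj
      rw [hG, Finset.mem_filter] at hj
      exact Finset.mem_filter.mpr ⟨hj.1, hj.2.1⟩) ?_).symm
    intro j hj hnj
    rw [Finset.mem_filter] at hj
    rw [hG, Finset.mem_filter] at hnj
    push_neg at hnj
    exact not_not.mp (fun hne => hne (hnj hj.1 hj.2))]

set_option maxHeartbeats 1000000 in
lemma Ebi_formula {d₁ d₂ : ℕ} (M : Matrix (Fin d₁) (Fin d₂) ℂ)
    (k₁ k₂ : ℕ) (hk₁ : 1 ≤ k₁) (hk₁d : k₁ ≤ d₁) (hk₂ : 1 ≤ k₂) (hk₂d : k₂ ≤ d₂) :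
    Ebi k₁ k₂ M =
      psum (sortedDesc (Matrix.posSemidef_self_mul_conjTranspose M).1.eigenvalues)
        (min k₁ k₂) := by
  classical
  set hρ₁ := Matrix.posSemidef_self_mul_conjTranspose M with hhρ₁
  set T := psum (sortedDesc hρ₁.1.eigenvalues) (min k₁ k₂) with hT
  set S : Set ℝ := {x | ∃ (P : Matrix (Fin d₁) (Fin d₁) ℂ) (Q : Matrix (Fin d₂) (Fin d₂) ℂ),
    IsProjOfRank P k₁ ∧ IsProjOfRank Q k₂ ∧
    x = ∑ i, ∑ j, Complex.normSq ((P * M * Qᵀ) i j)} with hS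
  -- ===== upper bound =====
  have hub : ∀ x ∈ S, x ≤ T := by
    rintro x ⟨P, Q, ⟨hPH, hPI, hPrk⟩, ⟨hQH, hQI, hQrk⟩, rfl⟩
    have hxval : (∑ i, ∑ j, Complex.normSq ((P * M * Qᵀ) i j)) = frobSq (P * M * Qᵀ) := rfl
    rw [hxval]
    have hRH : (Qᵀ)ᴴ = Qᵀ := by
      ext i j
      have h := congr_fun (congr_fun hQH j) i
      simpa [Matrix.conjTranspose_apply, Matrix.transpose_apply] using h
    have hRI : Qᵀ * Qᵀ = Qᵀ := by
      rw [show (Qᵀ * Qᵀ : Matrix (Fin d₂) (Fin d₂) ℂ) = (Q * Q)ᵀ from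
        (Matrix.transpose_mul Q Q).symm, hQI]
    have hRrk : (Qᵀ).rank = k₂ := by rw [Matrix.rank_transpose, hQrk]
    rcases le_total k₁ k₂ with hle | hle
    · have hmin : min k₁ k₂ = k₁ := min_eq_left hle
      have step1 : frobSq (P * M * Qᵀ) ≤ frobSq (P * M) := frobSq_mul_le _ _ hRH hRI
      have step2 : frobSq (P * M) = (((M * Mᴴ) * P).trace).re := by
        rw [← frobSq_conjTranspose (P * M), Matrix.conjTranspose_mul, hPH,
          frobSq_mul_proj_eq Mᴴ P hPH hPI, Matrix.conjTranspose_conjTranspose]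
      have step3 : (((M * Mᴴ) * P).trace).re ≤ T := by
        rw [hT, hmin]
        exact trace_psd_mul_proj_le hρ₁ P hPH hPI k₁
          (by rw [re_trace_proj_eq_rank P hPH hPI, hPrk])
      linarith
    · have hmin : min k₁ k₂ = k₂ := min_eq_right hle
      have step1 : frobSq (P * M * Qᵀ) ≤ frobSq (M * Qᵀ) := by
        rw [Matrix.mul_assoc]
        exact frobSq_proj_mul_le _ _ hPH hPI
      have step2 : frobSq (M * Qᵀ) = (((Mᴴ * M) * Qᵀ).trace).re :=
        frobSq_mul_proj_eq M Qᵀ hRH hRI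
      have step3 : (((Mᴴ * M) * Qᵀ).trace).re ≤
          psum (sortedDesc (Matrix.posSemidef_conjTranspose_mul_self M).1.eigenvalues) k₂ :=
        trace_psd_mul_proj_le (Matrix.posSemidef_conjTranspose_mul_self M) Qᵀ hRH hRI k₂
          (by rw [re_trace_proj_eq_rank Qᵀ hRH hRI, hRrk])
      have step4 := psum_transfer M k₂ (le_trans hle hk₁d) hk₂d
      rw [hT, hmin]
      rw [hhρ₁] at *
      linarith
  -- ===== witness construction =====
  set k := min k₁ k₂ with hk
  have hkk₁ : k ≤ k₁ := min_le_left _ _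
  have hkk₂ : k ≤ k₂ := min_le_right _ _
  have hkd₁ : k ≤ d₁ := le_trans hkk₁ hk₁d
  have hkd₂ : k ≤ d₂ := le_trans hkk₂ hk₂d
  set hH := hρ₁.1 with hhH
  set lam : ℕ → ℝ := fun t => if h : t < d₁ then sortedDesc hH.eigenvalues ⟨t, h⟩ else 0
    with hlam
  set σ : Equiv.Perm (Fin d₁) := sortPerm hH.eigenvalues with hσ
  set U₁ : Matrix (Fin d₁) (Fin d₁) ℂ :=
    (Matrix.IsHermitian.eigenvectorUnitary hH : Matrix (Fin d₁) (Fin d₁) ℂ) with hU₁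
  have hsU₁ : star U₁ * U₁ = 1 :=
    Matrix.mem_unitaryGroup_iff'.mp (Matrix.IsHermitian.eigenvectorUnitary hH).2
  have hU₁mem : U₁ ∈ Matrix.unitaryGroup (Fin d₁) ℂ :=
    (Matrix.IsHermitian.eigenvectorUnitary hH).2
  set χ₁ : Fin d₁ → ℂ := fun a => if ((σ.symm a : Fin d₁) : ℕ) < k₁ then 1 else 0 with hχ₁
  have hχ₁01 : ∀ a, χ₁ a = 0 ∨ χ₁ a = 1 := by
    intro a
    by_cases h : ((σ.symm a : Fin d₁) : ℕ) < k₁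
    · right; simp [hχ₁, h]
    · left; simp [hχ₁, h]
  set P : Matrix (Fin d₁) (Fin d₁) ℂ := U₁ * diagonal χ₁ * U₁ᴴ with hP
  have hPH : Pᴴ = P := udiag_conjTranspose U₁ χ₁ hχ₁01
  have hPI : P * P = P := udiag_idem U₁ hsU₁ χ₁ hχ₁01
  have hPrk : P.rank = k₁ := by
    rw [hP, udiag_rank U₁ hU₁mem χ₁]
    rw [show (Finset.univ.filter (fun a : Fin d₁ => χ₁ a ≠ 0)) =
        (Finset.univ.filter (fun a : Fin d₁ => ((σ.symm a : Fin d₁) : ℕ) < k₁)) from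
      Finset.filter_congr fun a _ => by
        by_cases h : ((σ.symm a : Fin d₁) : ℕ) < k₁ <;> simp [hχ₁, h]]
    have hcard : (Finset.univ.filter (fun a : Fin d₁ => ((σ.symm a : Fin d₁) : ℕ) < k₁)).card
        = (Finset.univ.filter (fun i : Fin d₁ => (i : ℕ) < k₁)).card := by
      apply Finset.card_nbij' (i := fun a => σ.symm a) (j := fun b => σ b)
      · intro a ha
        simp only [Finset.mem_coe, Finset.mem_filter, Finset.mem_univ, true_and] at ha ⊢
        exact ha
      · intro b hb
        simp only [Finset.mem_coe, Finset.mem_filter, Finset.mem_univ, true_and] at hb ⊢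
        rwa [Equiv.symm_apply_apply]
      · intro a _; exact Equiv.apply_symm_apply σ a
      · intro b _; exact Equiv.symm_apply_apply σ b
    rw [hcard, card_filter_lt hk₁d]
  -- eigen-column functions
  set uvec : ℕ → (Fin d₁ → ℂ) := fun t =>
    if h : t < d₁ then (fun x => U₁ x (σ ⟨t, h⟩)) else 0 with huvec
  have hlam_eq : ∀ (t : ℕ) (h : t < d₁), lam t = hH.eigenvalues (σ ⟨t, h⟩) := by
    intro t h
    rw [hlam]
    simp only [dif_pos h]
    rw [sortedDesc_eq, hσ]
  have hlam_nonneg : ∀ t : ℕ, 0 ≤ lam t := by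
    intro t
    by_cases h : t < d₁
    · rw [hlam_eq t h]; exact hρ₁.eigenvalues_nonneg _
    · rw [hlam]; simp only [dif_neg h]; exact le_refl 0
  have hudot : ∀ (t1 t2 : ℕ) (h1 : t1 < d₁) (h2 : t2 < d₁),
      star (uvec t1) ⬝ᵥ uvec t2 = if t1 = t2 then (1:ℂ) else 0 := by
    intro t1 t2 h1 h2
    rw [huvec]
    simp only [dif_pos h1, dif_pos h2]
    rw [hU₁, eigencol_dot hH (σ ⟨t1, h1⟩) (σ ⟨t2, h2⟩)]
    simp only [Equiv.apply_eq_iff_eq, Fin.mk.injEq]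
  have hMuvec : ∀ (t : ℕ) (h : t < d₁),
      (M * Mᴴ) *ᵥ uvec t = ((lam t : ℝ) : ℂ) • uvec t := by
    intro t h
    rw [huvec]
    simp only [dif_pos h]
    rw [hU₁, eigencol_mulVec hH (σ ⟨t, h⟩), hlam_eq t h]
  set cplx : ℕ → ℂ := fun t => (((Real.sqrt (lam t))⁻¹ : ℝ) : ℂ) with hcplx
  set vfun : Fin d₂ → (Fin d₂ → ℂ) := fun j =>
    if (j : ℕ) < k ∧ lam j ≠ 0 then cplx j • (Mᴴ *ᵥ uvec j) else 0 with hvfun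
  have hvfun_of : ∀ j : Fin d₂, (j : ℕ) < k → lam j ≠ 0 →
      vfun j = cplx j • (Mᴴ *ᵥ uvec j) := by
    intro j hj1 hj2
    rw [hvfun]
    simp only [if_pos (And.intro hj1 hj2)]
  have hvdot : ∀ a b : Fin d₂, (a : ℕ) < k → lam a ≠ 0 → (b : ℕ) < k → lam b ≠ 0 →
      star (vfun a) ⬝ᵥ vfun b = if a = b then (1:ℂ) else 0 := by
    intro a b ha1 ha2 hb1 hb2
    have had : (a : ℕ) < d₁ := lt_of_lt_of_le ha1 hkd₁
    have hbd : (b : ℕ) < d₁ := lt_of_lt_of_le hb1 hkd₁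
    rw [hvfun_of a ha1 ha2, hvfun_of b hb1 hb2]
    rw [star_smul, smul_dotProduct, dotProduct_smul]
    have hcore : star (Mᴴ *ᵥ uvec (a : ℕ)) ⬝ᵥ (Mᴴ *ᵥ uvec (b : ℕ)) =
        ((lam b : ℝ) : ℂ) * (if (a : ℕ) = (b : ℕ) then 1 else 0) := by
      rw [Matrix.star_mulVec, Matrix.conjTranspose_conjTranspose,
        ← Matrix.dotProduct_mulVec, Matrix.mulVec_mulVec, hMuvec b hbd,
        dotProduct_smul, hudot a b had hbd]
      simp
    rw [hcore]
    rcases eq_or_ne a b with rfl | hne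
    · simp only [if_pos rfl, mul_one]
      have hpos : 0 < lam (a : ℕ) := lt_of_le_of_ne (hlam_nonneg _) (Ne.symm ha2)
      have hs : Real.sqrt (lam (a : ℕ)) ≠ 0 := ne_of_gt (Real.sqrt_pos.mpr hpos)
      have hca : (Real.sqrt (lam (a:ℕ)))⁻¹ * (Real.sqrt (lam (a:ℕ)))⁻¹ * lam (a:ℕ) = 1 := by
        field_simp
        rw [Real.sq_sqrt hpos.le]
      rw [hcplx]
      simp only [Complex.star_def, Complex.conj_ofReal, smul_eq_mul]
      norm_cast
      simp only [if_true, mul_one]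
      linear_combination hca
    · have hne2 : ((a : ℕ) : ℕ) ≠ ((b : ℕ) : ℕ) := fun h => hne (Fin.ext h)
      simp [hne, hne2]
  set sset : Set (Fin d₂) := {j | (j : ℕ) < k ∧ lam j ≠ 0} with hsset
  set vE : Fin d₂ → EuclideanSpace ℂ (Fin d₂) :=
    fun j => (WithLp.equiv 2 (Fin d₂ → ℂ)).symm (vfun j) with hvE
  have horth : Orthonormal ℂ (sset.restrict vE) := by
    rw [orthonormal_iff_ite]
    rintro ⟨ja, hja⟩ ⟨jb, hjb⟩
    rw [hsset] at hja hjb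
    have hinner : (inner ℂ (vE ja) (vE jb) : ℂ) = star (vfun ja) ⬝ᵥ vfun jb := by
      rw [hvE, EuclideanSpace.inner_eq_star_dotProduct, dotProduct_comm]
      rfl
    change inner ℂ (vE ja) (vE jb) = _
    rw [hinner,
      hvdot ja jb hja.1 hja.2 hjb.1 hjb.2]
    simp only [Subtype.mk.injEq]
  obtain ⟨bb, hbb⟩ := horth.exists_orthonormalBasis_extension_of_card_eq
    (by simp [finrank_euclideanSpace])
  set U₂ : Matrix (Fin d₂) (Fin d₂) ℂ := Matrix.of (fun x j => bb j x) with hU₂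
  have hsU₂ : star U₂ * U₂ = 1 := by
    ext a c
    have h := (orthonormal_iff_ite.mp bb.orthonormal) a c
    rw [EuclideanSpace.inner_eq_star_dotProduct, dotProduct_comm] at h
    rw [Matrix.one_apply]
    rw [← h]
    rfl
  have hU₂mem : U₂ ∈ Matrix.unitaryGroup (Fin d₂) ℂ := Matrix.mem_unitaryGroup_iff'.mpr hsU₂
  set χ₂ : Fin d₂ → ℂ := fun j => if (j : ℕ) < k₂ then 1 else 0 with hχ₂
  set χ₀ : Fin d₂ → ℂ := fun j => if (j : ℕ) < k ∧ lam j ≠ 0 then 1 else 0 with hχ₀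
  have hχ₂01 : ∀ j, χ₂ j = 0 ∨ χ₂ j = 1 := by
    intro j; by_cases h : (j : ℕ) < k₂
    · right; simp [hχ₂, h]
    · left; simp [hχ₂, h]
  have hχd01 : ∀ j, χ₂ j - χ₀ j = 0 ∨ χ₂ j - χ₀ j = 1 := by
    intro j
    by_cases h : (j : ℕ) < k ∧ lam j ≠ 0
    · left
      have h2 : (j : ℕ) < k₂ := lt_of_lt_of_le h.1 hkk₂
      simp [hχ₂, hχ₀, h, h2]
    · by_cases h2 : (j : ℕ) < k₂
      · right; simp [hχ₂, hχ₀, h, h2]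
      · left; simp [hχ₂, hχ₀, h, h2]
  set R : Matrix (Fin d₂) (Fin d₂) ℂ := U₂ * diagonal χ₂ * U₂ᴴ with hR
  set R₀ : Matrix (Fin d₂) (Fin d₂) ℂ := U₂ * diagonal χ₀ * U₂ᴴ with hR₀
  set R₁ : Matrix (Fin d₂) (Fin d₂) ℂ := U₂ * diagonal (fun j => χ₂ j - χ₀ j) * U₂ᴴ with hR₁
  have hRH : Rᴴ = R := udiag_conjTranspose U₂ χ₂ hχ₂01
  have hRI : R * R = R := udiag_idem U₂ hsU₂ χ₂ hχ₂01
  have hR₁H : R₁ᴴ = R₁ := udiag_conjTranspose U₂ _ hχd01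
  have hR₁I : R₁ * R₁ = R₁ := udiag_idem U₂ hsU₂ _ hχd01
  have hRrk : R.rank = k₂ := by
    rw [hR, udiag_rank U₂ hU₂mem χ₂]
    rw [show (Finset.univ.filter (fun j : Fin d₂ => χ₂ j ≠ 0)) =
        (Finset.univ.filter (fun j : Fin d₂ => (j : ℕ) < k₂)) from
      Finset.filter_congr fun j _ => by
        by_cases h : (j : ℕ) < k₂ <;> simp [hχ₂, h]]
    exact card_filter_lt hk₂d
  set Q : Matrix (Fin d₂) (Fin d₂) ℂ := Rᵀ with hQdef
  have hQH : Qᴴ = Q := by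
    ext i j
    have h := congr_fun (congr_fun hRH j) i
    simp only [Matrix.conjTranspose_apply, Matrix.transpose_apply, hQdef] at h ⊢
    exact h
  have hQI : Q * Q = Q := by
    rw [hQdef, show (Rᵀ * Rᵀ : Matrix (Fin d₂) (Fin d₂) ℂ) = (R * R)ᵀ from
      (Matrix.transpose_mul R R).symm, hRI]
  have hQrk : Q.rank = k₂ := by rw [hQdef, Matrix.rank_transpose, hRrk]
  have hQT : Qᵀ = R := by rw [hQdef, Matrix.transpose_transpose]
  set x₀ : ℝ := ∑ i, ∑ j, Complex.normSq ((P * M * Qᵀ) i j) with hx₀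
  have hmem : x₀ ∈ S := by
    rw [hS]
    exact ⟨P, Q, ⟨hPH, hPI, hPrk⟩, ⟨hQH, hQI, hQrk⟩, hx₀⟩
  have hx₀R : x₀ = frobSq (P * M * R) := by rw [hx₀, hQT]; rfl
  set B : Matrix (Fin d₂) (Fin d₂) ℂ := Mᴴ * (P * M) with hB
  have hBeq : (P * M)ᴴ * (P * M) = B := by
    rw [Matrix.conjTranspose_mul, hPH, Matrix.mul_assoc, ← Matrix.mul_assoc P P M, hPI]
  have hsplit : frobSq (P * M * R) = ((B * R₀).trace).re + ((B * R₁).trace).re := by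
    rw [frobSq_mul_proj_eq (P * M) R hRH hRI, hBeq]
    have hR01 : R = R₀ + R₁ := by
      rw [hR, hR₀, hR₁, ← Matrix.add_mul, ← Matrix.mul_add, Matrix.diagonal_add]
      rw [show (fun j => χ₀ j + (χ₂ j - χ₀ j)) = χ₂ from funext fun j => by ring]
    rw [hR01, Matrix.mul_add, Matrix.trace_add, Complex.add_re]
  have hpos1 : 0 ≤ ((B * R₁).trace).re := by
    rw [← hBeq, ← frobSq_mul_proj_eq (P * M) R₁ hR₁H hR₁I]
    exact frobSq_nonneg _
  have hPu : ∀ (t : ℕ) (ht : t < k), P *ᵥ uvec t = uvec t := by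
    intro t ht
    have htd : t < d₁ := lt_of_lt_of_le ht hkd₁
    rw [huvec]
    simp only [dif_pos htd]
    have h1 := udiag_mulVec_col U₁ hsU₁ χ₁ (σ ⟨t, htd⟩)
    rw [← hP] at h1
    have hχval : χ₁ (σ ⟨t, htd⟩) = 1 := by
      simp only [hχ₁, Equiv.symm_apply_apply]
      exact if_pos (lt_of_lt_of_le ht hkk₁)
    rw [h1, hχval, one_smul]
  have hcol : ∀ j : Fin d₂, (j : ℕ) < k → lam j ≠ 0 → (fun x => U₂ x j) = vfun j := by
    intro j h1 h2
    have hjs : j ∈ sset := by rw [hsset]; exact ⟨h1, h2⟩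
    have hbj := hbb j hjs
    funext x
    show U₂ x j = vfun j x
    simp only [hU₂, Matrix.of_apply]
    rw [hbj, hvE]
    rfl
  have hBv : ∀ j : Fin d₂, (j : ℕ) < k → lam j ≠ 0 →
      B *ᵥ vfun j = ((lam (j : ℕ) : ℝ) : ℂ) • vfun j := by
    intro j h1 h2
    have hjd : (j : ℕ) < d₁ := lt_of_lt_of_le h1 hkd₁
    rw [hvfun_of j h1 h2, Matrix.mulVec_smul]
    have hchain : B *ᵥ (Mᴴ *ᵥ uvec (j : ℕ)) =
        ((lam (j : ℕ) : ℝ) : ℂ) • (Mᴴ *ᵥ uvec (j : ℕ)) := by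
      rw [hB]
      calc (Mᴴ * (P * M)) *ᵥ (Mᴴ *ᵥ uvec (j : ℕ))
          = Mᴴ *ᵥ ((P * M) *ᵥ (Mᴴ *ᵥ uvec (j : ℕ))) := (Matrix.mulVec_mulVec _ _ _).symm
        _ = Mᴴ *ᵥ (P *ᵥ (M *ᵥ (Mᴴ *ᵥ uvec (j : ℕ)))) := by
            rw [show P *ᵥ (M *ᵥ (Mᴴ *ᵥ uvec (j : ℕ))) = (P * M) *ᵥ (Mᴴ *ᵥ uvec (j : ℕ)) from
              Matrix.mulVec_mulVec _ _ _]
        _ = Mᴴ *ᵥ (P *ᵥ ((M * Mᴴ) *ᵥ uvec (j : ℕ))) := by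
            rw [show M *ᵥ (Mᴴ *ᵥ uvec (j : ℕ)) = (M * Mᴴ) *ᵥ uvec (j : ℕ) from
              Matrix.mulVec_mulVec _ _ _]
        _ = Mᴴ *ᵥ (P *ᵥ (((lam (j : ℕ) : ℝ) : ℂ) • uvec (j : ℕ))) := by
            rw [hMuvec (j : ℕ) hjd]
        _ = Mᴴ *ᵥ (((lam (j : ℕ) : ℝ) : ℂ) • (P *ᵥ uvec (j : ℕ))) := by
            rw [Matrix.mulVec_smul]
        _ = ((lam (j : ℕ) : ℝ) : ℂ) • (Mᴴ *ᵥ (P *ᵥ uvec (j : ℕ))) := by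
            rw [Matrix.mulVec_smul]
        _ = ((lam (j : ℕ) : ℝ) : ℂ) • (Mᴴ *ᵥ uvec (j : ℕ)) := by
            rw [hPu (j : ℕ) h1]
    rw [hchain, smul_comm]
  have hterm : ∀ j : Fin d₂,
      χ₀ j * ((B * vecMulVec (fun x => U₂ x j) (star (fun x => U₂ x j))).trace) =
        (((if (j : ℕ) < k then lam (j : ℕ) else 0 : ℝ)) : ℂ) := by
    intro j
    rw [trace_mul_vecMulVec]
    by_cases hj : (j : ℕ) < k ∧ lam (j : ℕ) ≠ 0
    · rw [hcol j hj.1 hj.2, hBv j hj.1 hj.2, dotProduct_smul,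
        hvdot j j hj.1 hj.2 hj.1 hj.2, if_pos rfl]
      simp only [hχ₀, if_pos hj]
      rw [if_pos hj.1]
      simp
    · simp only [hχ₀, if_neg hj, zero_mul]
      by_cases h1 : (j : ℕ) < k
      · have hz : lam (j : ℕ) = 0 := by
          by_contra h2; exact hj ⟨h1, h2⟩
        rw [if_pos h1, hz]; simp
      · rw [if_neg h1]; simp
  have htrace₀ : ((B * R₀).trace).re = T := by
    rw [hR₀, udiag_eq_sum_outer U₂ χ₀, Finset.mul_sum, Matrix.trace_sum]
    simp_rw [Matrix.mul_smul, Matrix.trace_smul, smul_eq_mul]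
    rw [Finset.sum_congr rfl fun j _ => hterm j, Complex.re_sum]
    rw [show (∑ j : Fin d₂, ((((if (j : ℕ) < k then lam (j : ℕ) else 0 : ℝ)) : ℂ)).re)
        = ∑ j : Fin d₂, (if (j : ℕ) < k then lam (j : ℕ) else 0) from
      Finset.sum_congr rfl fun j _ => Complex.ofReal_re _]
    rw [sum_fin_ite_lt hkd₂ lam, ← sum_fin_ite_lt hkd₁ lam, hT]
    unfold psum
    refine Finset.sum_congr rfl fun i _ => ?_
    by_cases h : (i : ℕ) < k
    · rw [if_pos h, if_pos h]
      rw [hlam]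
      simp only [dif_pos i.isLt, Fin.eta]
    · rw [if_neg h, if_neg h]
  have hTx : T ≤ x₀ := by
    rw [hx₀R, hsplit, htrace₀]
    linarith [hpos1]
  have hEbi : Ebi k₁ k₂ M = sSup S := by rw [hS]; rfl
  rw [hEbi]
  refine le_antisymm (csSup_le ⟨x₀, hmem⟩ hub) ?_
  exact le_trans hTx (le_csSup ⟨T, fun x hx => hub x hx⟩ hmem)

/-- for a bipartite pure state with coefficient matrix M (so that the
reduced density matrix is ρ₁ = M Mᴴ), E_{k₁,k₂} equals the sum of the min(k₁,k₂)
largest eigenvalues of ρ₁; in particular E_{k₁,k₂} = E_{k₂,k₁}. -/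
theorem Ebi_eq_sum_largest_eigenvalues
    {d₁ d₂ : ℕ} (M : Matrix (Fin d₁) (Fin d₂) ℂ)
    (k₁ k₂ : ℕ) (hk₁ : 1 ≤ k₁) (hk₁d : k₁ ≤ d₁) (hk₂ : 1 ≤ k₂) (hk₂d : k₂ ≤ d₂) :
    Ebi k₁ k₂ M =
      psum (sortedDesc (Matrix.posSemidef_self_mul_conjTranspose M).1.eigenvalues)
        (min k₁ k₂) ∧
    (k₂ ≤ d₁ → k₁ ≤ d₂ → Ebi k₁ k₂ M = Ebi k₂ k₁ M) := by
  refine ⟨Ebi_formula M k₁ k₂ hk₁ hk₁d hk₂ hk₂d, ?_⟩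
  intro h1 h2
  rw [Ebi_formula M k₁ k₂ hk₁ hk₁d hk₂ hk₂d, Ebi_formula M k₂ k₁ hk₂ h1 hk₁ h2, min_comm]
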